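/- arXiv:2501.07144 — 4 statements merged into one kernel-verified Lean document; each statement's English description precedes it below -/
import Mathlib

section
/- Heine's identity: for a weight w on an interval I with monic orthogonal polynomials (p_j), the average of the characteristic polynomial over the β=2 matrix ensemble equals the N-th orthogonal polynomial: ⟨∏_{l=1}^N (x − λ_l)⟩ = p_N(x), where the average is with respect to the probability density proportional to ∏_l w(λ_l) ∏_{j<k}(λ_k − λ_j)² on I^N. -/
open MeasureTheory

lemma pi_restrict_eq {N : ℕ} (I : Set ℝ) (hI : MeasurableSet I) :
    (volume : Measure (Fin N → ℝ)).restrict (Set.univ.pi fun _ => I)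
      = Measure.pi (fun _ : Fin N => (volume : Measure ℝ).restrict I) := by
  refine (Measure.pi_eq fun t ht => ?_).symm
  rw [Measure.restrict_apply (MeasurableSet.univ_pi ht), ← Set.pi_inter_distrib,
    volume_pi, Measure.pi_pi]
  exact Finset.prod_congr rfl fun i _ => (Measure.restrict_apply (ht i)).symm

lemma integral_pi_prod' {N : ℕ} (I : Set ℝ) (f : Fin N → ℝ → ℝ) :
    (∫ lam : Fin N → ℝ, ∏ i, f i (lam i)
      ∂(Measure.pi fun _ : Fin N => (volume : Measure ℝ).restrict I))
      = ∏ i, ∫ t in I, f i t :=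
  MeasureTheory.integral_fintype_prod_eq_prod (ι := Fin N) (E := fun _ => ℝ) f
    (μ := fun _ => (volume : Measure ℝ).restrict I)

lemma integrable_pi_prod {N : ℕ} (I : Set ℝ) (f : Fin N → ℝ → ℝ)
    (hf : ∀ i, IntegrableOn (f i) I) :
    Integrable (fun lam : Fin N → ℝ => ∏ i, f i (lam i))
      (Measure.pi fun _ : Fin N => (volume : Measure ℝ).restrict I) :=
  Integrable.fintype_prod (ι := Fin N) (f := f)
    (μ := fun _ => (volume : Measure ℝ).restrict I) hf

lemma integrableOn_w_poly (I : Set ℝ) (w : ℝ → ℝ)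
    (hmom : ∀ j : ℕ, IntegrableOn (fun t => w t * t ^ j) I) (q : Polynomial ℝ) :
    IntegrableOn (fun t => w t * q.eval t) I := by
  have h : ∀ t : ℝ, w t * q.eval t
      = ∑ m ∈ Finset.range (q.natDegree + 1), q.coeff m * (w t * t ^ m) := by
    intro t
    rw [Polynomial.eval_eq_sum_range, Finset.mul_sum]
    exact Finset.sum_congr rfl fun m _ => by ring
  simp only [h]
  exact integrable_finset_sum _ fun m _ => ((hmom m).const_mul _)

lemma vandermonde_snoc {N : ℕ} (v : Fin N → ℝ) (x : ℝ) :
    (∏ i : Fin (N+1), ∏ k ∈ Finset.Ioi i, ((Fin.snoc v x : Fin (N+1) → ℝ) k - (Fin.snoc v x : Fin (N+1) → ℝ) i))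
      = (∏ i : Fin N, ∏ k ∈ Finset.Ioi i, (v k - v i)) * ∏ l, (x - v l) := by
  have conv1 : ∀ (M : ℕ) (μ : Fin M → ℝ),
      (∏ i, ∏ k ∈ Finset.Ioi i, (μ k - μ i))
        = ∏ i, ∏ k, if i < k then μ k - μ i else 1 := by
    intro M μ
    refine Finset.prod_congr rfl fun i _ => ?_
    rw [← Finset.filter_lt_eq_Ioi, Finset.prod_filter]
  rw [conv1, conv1]
  rw [Fin.prod_univ_castSucc (f := fun i : Fin (N+1) =>
    ∏ k, if i < k then (Fin.snoc v x : Fin (N+1) → ℝ) k - (Fin.snoc v x : Fin (N+1) → ℝ) i else 1)]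
  have hlast : (∏ k : Fin (N+1),
      if Fin.last N < k then (Fin.snoc v x : Fin (N+1) → ℝ) k - (Fin.snoc v x : Fin (N+1) → ℝ) (Fin.last N) else 1) = 1 :=
    Finset.prod_eq_one fun k _ => if_neg (Fin.not_lt.2 (Fin.le_last k))
  rw [hlast, mul_one]
  have hrow : ∀ i' : Fin N,
      (∏ k : Fin (N+1), if (Fin.castSucc i') < k
          then (Fin.snoc v x : Fin (N+1) → ℝ) k - (Fin.snoc v x : Fin (N+1) → ℝ) (Fin.castSucc i') else 1)
        = (∏ k' : Fin N, if i' < k' then v k' - v i' else 1) * (x - v i') := by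
    intro i'
    rw [Fin.prod_univ_castSucc (f := fun k : Fin (N+1) =>
      if (Fin.castSucc i') < k then (Fin.snoc v x : Fin (N+1) → ℝ) k - (Fin.snoc v x : Fin (N+1) → ℝ) (Fin.castSucc i') else 1)]
    congr 1
    · refine Finset.prod_congr rfl fun k' _ => ?_
      rw [Fin.snoc_castSucc, Fin.snoc_castSucc]
      simp [Fin.castSucc_lt_castSucc_iff]
    · rw [if_pos (Fin.castSucc_lt_last i'), Fin.snoc_last, Fin.snoc_castSucc]
  simp_rw [hrow]
  rw [Finset.prod_mul_distrib]

lemma det_prod_expand {N : ℕ} (w : ℝ → ℝ) (F G : Fin N → ℝ → ℝ) (lam : Fin N → ℝ) :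
    (∏ l, w (lam l)) * Matrix.det (Matrix.of fun k i : Fin N => F i (lam k))
        * Matrix.det (Matrix.of fun k i : Fin N => G i (lam k))
      = ∑ σ : Equiv.Perm (Fin N), ∑ τ : Equiv.Perm (Fin N),
          (((Equiv.Perm.sign σ : ℤ) : ℝ) * ((Equiv.Perm.sign τ : ℤ) : ℝ)) *
            ∏ l, (w (lam l) * (F (σ⁻¹ l) (lam l) * G (τ⁻¹ l) (lam l))) := by
  have reind : ∀ (H : Fin N → ℝ → ℝ) (σ : Equiv.Perm (Fin N)),
      (∏ i, H i (lam (σ i))) = ∏ l, H (σ⁻¹ l) (lam l) := by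
    intro H σ
    rw [← Equiv.prod_comp σ (fun l => H (σ⁻¹ l) (lam l))]
    simp
  rw [Matrix.det_apply', Matrix.det_apply', mul_assoc, Finset.sum_mul_sum, Finset.mul_sum]
  refine Finset.sum_congr rfl fun σ _ => ?_
  rw [Finset.mul_sum]
  refine Finset.sum_congr rfl fun τ _ => ?_
  simp only [Matrix.of_apply]
  rw [reind F σ, reind G τ]
  rw [Finset.prod_mul_distrib]
  rw [Finset.prod_mul_distrib]
  ring

lemma integrableOn_w_pp (I : Set ℝ) (w : ℝ → ℝ)
    (hmom : ∀ j : ℕ, IntegrableOn (fun t => w t * t ^ j) I)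
    (P : ℕ → Polynomial ℝ) (u v : ℕ) :
    IntegrableOn (fun t => w t * ((P u).eval t * (P v).eval t)) I := by
  have := integrableOn_w_poly I w hmom (P u * P v)
  simpa [Polynomial.eval_mul] using this

lemma integrable_det_prod {N : ℕ} (I : Set ℝ) (w : ℝ → ℝ)
    (hmom : ∀ j : ℕ, IntegrableOn (fun t => w t * t ^ j) I)
    (P : ℕ → Polynomial ℝ) (a b : Fin N → ℕ) :
    Integrable (fun lam : Fin N → ℝ =>
        (∏ l, w (lam l)) * Matrix.det (Matrix.of fun k i : Fin N => (P (a i)).eval (lam k))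
          * Matrix.det (Matrix.of fun k i : Fin N => (P (b i)).eval (lam k)))
      (Measure.pi fun _ : Fin N => (volume : Measure ℝ).restrict I) := by
  simp only [det_prod_expand w (fun i t => (P (a i)).eval t) (fun i t => (P (b i)).eval t)]
  refine integrable_finset_sum _ fun σ _ => integrable_finset_sum _ fun τ _ => ?_
  exact (integrable_pi_prod I _ (fun l => integrableOn_w_pp I w hmom P _ _)).const_mul _

lemma integral_det_prod {N : ℕ} (I : Set ℝ) (w : ℝ → ℝ)
    (hmom : ∀ j : ℕ, IntegrableOn (fun t => w t * t ^ j) I)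
    (P : ℕ → Polynomial ℝ) (a b : Fin N → ℕ) :
    (∫ lam : Fin N → ℝ,
        (∏ l, w (lam l)) * Matrix.det (Matrix.of fun k i : Fin N => (P (a i)).eval (lam k))
          * Matrix.det (Matrix.of fun k i : Fin N => (P (b i)).eval (lam k))
      ∂(Measure.pi fun _ : Fin N => (volume : Measure ℝ).restrict I))
      = ∑ σ : Equiv.Perm (Fin N), ∑ τ : Equiv.Perm (Fin N),
          (((Equiv.Perm.sign σ : ℤ) : ℝ) * ((Equiv.Perm.sign τ : ℤ) : ℝ)) *
            ∏ l, ∫ t in I, w t * ((P (a (σ⁻¹ l))).eval t * (P (b (τ⁻¹ l))).eval t) := by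
  simp only [det_prod_expand w (fun i t => (P (a i)).eval t) (fun i t => (P (b i)).eval t)]
  rw [integral_finset_sum _ (fun σ _ => integrable_finset_sum _ fun τ _ =>
    (integrable_pi_prod I _ (fun l => integrableOn_w_pp I w hmom P _ _)).const_mul _)]
  refine Finset.sum_congr rfl fun σ _ => ?_
  rw [integral_finset_sum _ (fun τ _ =>
    (integrable_pi_prod I _ (fun l => integrableOn_w_pp I w hmom P _ _)).const_mul _)]
  refine Finset.sum_congr rfl fun τ _ => ?_
  rw [MeasureTheory.integral_const_mul]
  congr 1
  exact integral_pi_prod' I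
    (fun l t => w t * ((P (a (σ⁻¹ l))).eval t * (P (b (τ⁻¹ l))).eval t))

lemma perm_sum_zero {N : ℕ} (c : ℕ → ℕ → ℝ) (hc : ∀ u v : ℕ, u ≠ v → c u v = 0)
    (a : Fin N → ℕ) (i0 : Fin N) (h0 : a i0 = N) :
    (∑ σ : Equiv.Perm (Fin N), ∑ τ : Equiv.Perm (Fin N),
        (((Equiv.Perm.sign σ : ℤ) : ℝ) * ((Equiv.Perm.sign τ : ℤ) : ℝ)) *
          ∏ l, c (a (σ⁻¹ l)) ((τ⁻¹ l : Fin N) : ℕ)) = 0 := by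
  refine Finset.sum_eq_zero fun σ _ => Finset.sum_eq_zero fun τ _ => ?_
  have hzero : (∏ l, c (a (σ⁻¹ l)) ((τ⁻¹ l : Fin N) : ℕ)) = 0 := by
    refine Finset.prod_eq_zero (Finset.mem_univ (σ i0)) ?_
    rw [(show σ⁻¹ (σ i0) = i0 from σ.symm_apply_apply i0), h0]
    exact hc _ _ (Fin.is_lt _).ne'
  rw [hzero, mul_zero]
lemma snoc_expand {N : ℕ} (P : ℕ → Polynomial ℝ)
    (hmonic : ∀ j, (P j).Monic) (hdeg : ∀ j, (P j).natDegree = j)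
    (x : ℝ) (lam : Fin N → ℝ) :
    (∏ i, ∏ k ∈ Finset.Ioi i, (lam k - lam i)) * (∏ m, (x - lam m))
      = ∑ j : Fin (N+1), (-1 : ℝ) ^ ((Fin.last N : ℕ) + (j : ℕ)) * (P (j : ℕ)).eval x *
          Matrix.det (Matrix.of fun k i : Fin N =>
            (P ((j.succAbove i : Fin (N+1)) : ℕ)).eval (lam k)) := by
  have h1 : (∏ i, ∏ k ∈ Finset.Ioi i, (lam k - lam i)) * (∏ m, (x - lam m))
      = (Matrix.vandermonde (Fin.snoc lam x : Fin (N+1) → ℝ)).det := by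
    rw [Matrix.det_vandermonde]
    exact (vandermonde_snoc lam x).symm
  rw [h1, Matrix.det_eval_matrixOfPolynomials_eq_det_vandermonde _
    (fun i : Fin (N+1) => P (i : ℕ)) (fun i => hdeg _) (fun i => hmonic _)]
  rw [Matrix.det_succ_row _ (Fin.last N)]
  refine Finset.sum_congr rfl fun j _ => ?_
  congr 2
  · show (P (j : ℕ)).eval ((Fin.snoc lam x : Fin (N+1) → ℝ) (Fin.last N)) = (P (j : ℕ)).eval x
    rw [Fin.snoc_last]
  · ext k i
    simp [Matrix.submatrix_apply, Fin.succAbove_last, Fin.snoc_castSucc]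

/-- Heine's identity: the average of the characteristic polynomial over the β = 2
ensemble `ME_{2,N}[w]` (eigenvalue density on `I^N` proportional to
`∏ w(λ_l) ∏_{j<k} (λ_k − λ_j)²`) equals the `N`-th monic orthogonal polynomial of `w`. -/
theorem heine_average_char_poly
    (I : Set ℝ) (hI : MeasurableSet I) (w : ℝ → ℝ) (hw : ∀ t ∈ I, 0 ≤ w t)
    (hmom : ∀ j : ℕ, IntegrableOn (fun t => w t * t ^ j) I)
    (P : ℕ → Polynomial ℝ)
    (hmonic : ∀ j, (P j).Monic) (hdeg : ∀ j, (P j).natDegree = j)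
    (horth : ∀ j k, j ≠ k → (∫ t in I, w t * (P j).eval t * (P k).eval t) = 0)
    (hnorm : ∀ j, 0 < ∫ t in I, w t * (P j).eval t ^ 2)
    (N : ℕ) (x : ℝ)
    (hZ : 0 < ∫ lam in Set.univ.pi (fun _ : Fin N => I),
        (∏ l, w (lam l)) * (∏ j, ∏ k ∈ Finset.Ioi j, (lam k - lam j)) ^ 2) :
    (∫ lam in Set.univ.pi (fun _ : Fin N => I),
        (∏ m, (x - lam m)) *
          ((∏ l, w (lam l)) * (∏ j, ∏ k ∈ Finset.Ioi j, (lam k - lam j)) ^ 2)) /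
      (∫ lam in Set.univ.pi (fun _ : Fin N => I),
        (∏ l, w (lam l)) * (∏ j, ∏ k ∈ Finset.Ioi j, (lam k - lam j)) ^ 2)
      = (P N).eval x := by
  classical
  -- orthogonality in the convenient form
  have hc0 : ∀ u v : ℕ, u ≠ v → (∫ t in I, w t * ((P u).eval t * (P v).eval t)) = 0 := by
    intro u v huv
    have hfun : (fun t => w t * ((P u).eval t * (P v).eval t))
        = fun t => w t * (P u).eval t * (P v).eval t := by funext t; ring
    rw [hfun]; exact horth u v huv
  -- Vandermonde as determinant of orthogonal polynomials
  have hD : ∀ lam : Fin N → ℝ,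
      (∏ j, ∏ k ∈ Finset.Ioi j, (lam k - lam j))
        = Matrix.det (Matrix.of fun k i : Fin N => (P ((i : Fin N) : ℕ)).eval (lam k)) := by
    intro lam
    rw [← Matrix.det_vandermonde]
    exact Matrix.det_eval_matrixOfPolynomials_eq_det_vandermonde lam
      (fun i : Fin N => P (i : ℕ)) (fun i => hdeg _) (fun i => hmonic _)
  -- the common value of the denominator, as a permutation sum
  have hDenPt : ∀ lam : Fin N → ℝ,
      (∏ l, w (lam l)) * (∏ j, ∏ k ∈ Finset.Ioi j, (lam k - lam j)) ^ 2
        = (∏ l, w (lam l))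
            * Matrix.det (Matrix.of fun k i : Fin N => (P ((i : Fin N) : ℕ)).eval (lam k))
            * Matrix.det (Matrix.of fun k i : Fin N => (P ((i : Fin N) : ℕ)).eval (lam k)) := by
    intro lam; rw [hD lam]; ring
  have hDen : (∫ lam in Set.univ.pi (fun _ : Fin N => I),
        (∏ l, w (lam l)) * (∏ j, ∏ k ∈ Finset.Ioi j, (lam k - lam j)) ^ 2)
      = ∑ σ : Equiv.Perm (Fin N), ∑ τ : Equiv.Perm (Fin N),
          (((Equiv.Perm.sign σ : ℤ) : ℝ) * ((Equiv.Perm.sign τ : ℤ) : ℝ)) *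
            ∏ l, ∫ t in I, w t *
              ((P ((σ⁻¹ l : Fin N) : ℕ)).eval t * (P ((τ⁻¹ l : Fin N) : ℕ)).eval t) := by
    rw [pi_restrict_eq I hI]
    simp only [hDenPt]
    exact integral_det_prod I w hmom P (fun i => (i : ℕ)) (fun i => (i : ℕ))
  -- numerator, pointwise
  have hNumPt : ∀ lam : Fin N → ℝ,
      (∏ m, (x - lam m)) *
          ((∏ l, w (lam l)) * (∏ j, ∏ k ∈ Finset.Ioi j, (lam k - lam j)) ^ 2)
        = ∑ j : Fin (N+1),
            ((-1 : ℝ) ^ ((Fin.last N : ℕ) + (j : ℕ)) * (P (j : ℕ)).eval x) *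
              ((∏ l, w (lam l))
                * Matrix.det (Matrix.of fun k i : Fin N =>
                    (P ((j.succAbove i : Fin (N+1)) : ℕ)).eval (lam k))
                * Matrix.det (Matrix.of fun k i : Fin N =>
                    (P ((i : Fin N) : ℕ)).eval (lam k))) := by
    intro lam
    have e1 : (∏ m, (x - lam m)) *
          ((∏ l, w (lam l)) * (∏ j, ∏ k ∈ Finset.Ioi j, (lam k - lam j)) ^ 2)
        = ((∏ j, ∏ k ∈ Finset.Ioi j, (lam k - lam j)) * (∏ m, (x - lam m))) *
            ((∏ l, w (lam l)) * (∏ j, ∏ k ∈ Finset.Ioi j, (lam k - lam j))) := by ring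
    rw [e1, snoc_expand P hmonic hdeg x lam, Finset.sum_mul, hD lam]
    refine Finset.sum_congr rfl fun j _ => ?_
    ring
  -- numerator, integrated
  have hNum : (∫ lam in Set.univ.pi (fun _ : Fin N => I),
        (∏ m, (x - lam m)) *
          ((∏ l, w (lam l)) * (∏ j, ∏ k ∈ Finset.Ioi j, (lam k - lam j)) ^ 2))
      = (P N).eval x *
          ∑ σ : Equiv.Perm (Fin N), ∑ τ : Equiv.Perm (Fin N),
            (((Equiv.Perm.sign σ : ℤ) : ℝ) * ((Equiv.Perm.sign τ : ℤ) : ℝ)) *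
              ∏ l, ∫ t in I, w t *
                ((P ((σ⁻¹ l : Fin N) : ℕ)).eval t * (P ((τ⁻¹ l : Fin N) : ℕ)).eval t) := by
    rw [pi_restrict_eq I hI]
    simp only [hNumPt]
    rw [integral_finset_sum _ (fun j _ =>
      (integrable_det_prod I w hmom P
        (fun i => ((j.succAbove i : Fin (N+1)) : ℕ)) (fun i => (i : ℕ))).const_mul _)]
    have hterm : ∀ j : Fin (N+1),
        (∫ lam : Fin N → ℝ,
            ((-1 : ℝ) ^ ((Fin.last N : ℕ) + (j : ℕ)) * (P (j : ℕ)).eval x) *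
              ((∏ l, w (lam l))
                * Matrix.det (Matrix.of fun k i : Fin N =>
                    (P ((j.succAbove i : Fin (N+1)) : ℕ)).eval (lam k))
                * Matrix.det (Matrix.of fun k i : Fin N =>
                    (P ((i : Fin N) : ℕ)).eval (lam k)))
          ∂(Measure.pi fun _ : Fin N => (volume : Measure ℝ).restrict I))
        = ((-1 : ℝ) ^ ((Fin.last N : ℕ) + (j : ℕ)) * (P (j : ℕ)).eval x) *
            ∑ σ : Equiv.Perm (Fin N), ∑ τ : Equiv.Perm (Fin N),
              (((Equiv.Perm.sign σ : ℤ) : ℝ) * ((Equiv.Perm.sign τ : ℤ) : ℝ)) *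
                ∏ l, ∫ t in I, w t *
                  ((P ((j.succAbove (σ⁻¹ l) : Fin (N+1)) : ℕ)).eval t *
                    (P ((τ⁻¹ l : Fin N) : ℕ)).eval t) := by
      intro j
      rw [MeasureTheory.integral_const_mul]
      congr 1
      exact integral_det_prod I w hmom P
        (fun i => ((j.succAbove i : Fin (N+1)) : ℕ)) (fun i => (i : ℕ))
    simp only [hterm]
    rw [Finset.sum_eq_single (Fin.last N)]
    · -- the surviving term
      have hsa : ∀ i : Fin N, (((Fin.last N).succAbove i : Fin (N+1)) : ℕ) = (i : ℕ) := by
        intro i; rw [Fin.succAbove_last]; simp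
      simp only [hsa, Fin.val_last]
      rw [Even.neg_one_pow (⟨N, rfl⟩ : Even (N + N)), one_mul]
    · -- the vanishing terms
      intro j _ hj
      have hN1 : (j : ℕ) < N := by
        have := Fin.is_le j
        rcases Nat.lt_or_ge (j : ℕ) N with h | h
        · exact h
        · exact absurd (Fin.ext (by rw [Fin.val_last]; omega : (j : ℕ) = (Fin.last N : ℕ))) hj
      have hNpos : 0 < N := Nat.pos_of_ne_zero (by omega)
      set i0 : Fin N := ⟨N - 1, by omega⟩ with hi0
      have h0 : ((j.succAbove i0 : Fin (N+1)) : ℕ) = N := by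
        rw [Fin.succAbove_of_le_castSucc]
        · simp [hi0]; omega
        · rw [Fin.le_def]; simp [hi0]; omega
      rw [perm_sum_zero
        (fun u v => ∫ t in I, w t * ((P u).eval t * (P v).eval t)) hc0
        (fun i => ((j.succAbove i : Fin (N+1)) : ℕ)) i0 h0, mul_zero]
    · intro h; exact absurd (Finset.mem_univ _) h
  have hfinal : (∫ lam in Set.univ.pi (fun _ : Fin N => I),
        (∏ m, (x - lam m)) *
          ((∏ l, w (lam l)) * (∏ j, ∏ k ∈ Finset.Ioi j, (lam k - lam j)) ^ 2))
      = (P N).eval x * ∫ lam in Set.univ.pi (fun _ : Fin N => I),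
          (∏ l, w (lam l)) * (∏ j, ∏ k ∈ Finset.Ioi j, (lam k - lam j)) ^ 2 := by
    rw [hNum, hDen]
  rw [hfinal, mul_div_assoc, div_self (ne_of_gt hZ), mul_one]
end

section
/- For the β=2 ensemble with weight w and monic orthogonal polynomials (p_j), the average of a product of p characteristic polynomials at distinct points x_1,…,x_p equals det[p_{N+j−1}(x_k)]_{j,k=1,…,p} divided by the Vandermonde ∏_{1≤j<k≤p}(x_k − x_j). -/
open MeasureTheory

namespace CharPolyAux

noncomputable def vdm {M : ℕ} (y : Fin M → ℝ) : ℝ :=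
  ∏ j, ∏ k ∈ Finset.Ioi j, (y k - y j)

lemma Ioi_castSucc' {M : ℕ} (i : Fin M) :
    Finset.Ioi i.castSucc =
      insert (Fin.last M) ((Finset.Ioi i).map Fin.castSuccEmb) := by
  ext j
  induction j using Fin.lastCases with
  | last => simp [Fin.castSucc_lt_last]
  | cast j =>
      simp only [Finset.mem_Ioi, Finset.mem_insert, Finset.mem_map, Fin.castSuccEmb,
        Fin.castAddEmb, Fin.castSucc_lt_castSucc_iff]
      constructor
      · intro h; exact Or.inr ⟨j, h, rfl⟩
      · rintro (h | ⟨k, hk, hkj⟩)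
        · exact absurd h (Fin.castSucc_lt_last j).ne
        · cases Fin.castSucc_injective _ hkj; exact hk

lemma prod_Ioi_castSucc {M : ℕ} (f : Fin (M + 1) → ℝ) (i : Fin M) :
    ∏ k ∈ Finset.Ioi i.castSucc, f k =
      (∏ k ∈ Finset.Ioi i, f k.castSucc) * f (Fin.last M) := by
  rw [Ioi_castSucc', Finset.prod_insert, Finset.prod_map]
  · rw [mul_comm]; rfl
  · simp only [Finset.mem_map]
    rintro ⟨k, -, hk⟩
    exact (Fin.castSucc_lt_last k).ne hk

lemma vdm_snoc {M : ℕ} (y : Fin M → ℝ) (a : ℝ) :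
    vdm (Fin.snoc y a) = vdm y * ∏ j, (a - y j) := by
  unfold vdm
  rw [Fin.prod_univ_castSucc]
  have hlast : (Finset.Ioi (Fin.last M)) = (∅ : Finset (Fin (M + 1))) := by
    ext k; simp [Fin.le_last k, not_lt]
  rw [hlast]
  simp only [Finset.prod_empty, mul_one]
  have : ∀ j : Fin M,
      ∏ k ∈ Finset.Ioi j.castSucc, ((Fin.snoc y a : Fin (M+1) → ℝ) k -
        (Fin.snoc y a : Fin (M+1) → ℝ) j.castSucc) =
      (∏ k ∈ Finset.Ioi j, (y k - y j)) * (a - y j) := by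
    intro j
    rw [prod_Ioi_castSucc (fun k => (Fin.snoc y a : Fin (M+1) → ℝ) k -
      (Fin.snoc y a : Fin (M+1) → ℝ) j.castSucc) j]
    simp [Fin.snoc_castSucc, Fin.snoc_last]
  simp only [this]
  rw [Finset.prod_mul_distrib]


lemma vdm_append {N : ℕ} (lam : Fin N → ℝ) :
    ∀ {p : ℕ} (x : Fin p → ℝ), vdm (Fin.append lam x) =
      vdm lam * vdm x * ∏ l, ∏ m, (x l - lam m) := by
  intro p
  induction p with
  | zero =>
      intro x
      have hx : x = Fin.elim0 := funext fun i => i.elim0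
      subst hx
      rw [Fin.append_elim0]
      simp only [vdm, Finset.univ_eq_empty, Finset.prod_empty, mul_one]
      rfl
  | succ p ih =>
      intro x
      have hx : x = Fin.snoc (Fin.init x) (x (Fin.last p)) := (Fin.snoc_init_self x).symm
      rw [hx, Fin.append_snoc, vdm_snoc, ih (Fin.init x), vdm_snoc]
      have hp : (∏ j : Fin (N.add p), (x (Fin.last p) - Fin.append lam (Fin.init x) j)) =
          (∏ m : Fin N, (x (Fin.last p) - lam m)) *
            ∏ j : Fin p, (x (Fin.last p) - Fin.init x j) := by
        show (∏ j : Fin (N + p), (x (Fin.last p) - Fin.append lam (Fin.init x) j)) =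
          (∏ m : Fin N, (x (Fin.last p) - lam m)) *
            ∏ j : Fin p, (x (Fin.last p) - Fin.init x j)
        rw [Fin.prod_univ_add (f := fun j => x (Fin.last p) - Fin.append lam (Fin.init x) j)]
        simp only [Fin.append_left, Fin.append_right]
      rw [hp]
      rw [Fin.prod_univ_castSucc
        (f := fun l => ∏ m, ((Fin.snoc (Fin.init x) (x (Fin.last p)) : Fin (p+1) → ℝ) l - lam m))]
      simp only [Fin.snoc_castSucc, Fin.snoc_last]
      ring

lemma restrict_pi_pi {n : ℕ} (μ : Measure ℝ) [SigmaFinite μ] (s : Set ℝ)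
    (hs : MeasurableSet s) :
    (Measure.pi fun _ : Fin n => μ).restrict (Set.univ.pi fun _ => s) =
      Measure.pi fun _ : Fin n => μ.restrict s := by
  refine (Measure.pi_eq fun u hu => ?_).symm
  rw [Measure.restrict_apply (MeasurableSet.univ_pi hu), ← Set.pi_inter_distrib,
    Measure.pi_pi]
  simp_rw [Measure.restrict_apply (hu _)]

lemma integral_pi_prod {α : Type} [MeasurableSpace α] (μ : Measure α) [SigmaFinite μ] {n : ℕ}
    (f : Fin n → α → ℝ) :
    ∫ y : Fin n → α, ∏ i, f i (y i) ∂(Measure.pi fun _ => μ) = ∏ i, ∫ t, f i t ∂μ := by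
  letI : MeasureSpace α := ⟨μ⟩
  haveI : SigmaFinite (volume : Measure α) := inferInstanceAs (SigmaFinite μ)
  exact MeasureTheory.integral_fin_nat_prod_eq_prod f

lemma integrable_pi_prod {α : Type} [MeasurableSpace α] (μ : Measure α) [SigmaFinite μ] {n : ℕ}
    (f : Fin n → α → ℝ) (hf : ∀ i, Integrable (f i) μ) :
    Integrable (fun y : Fin n → α => ∏ i, f i (y i)) (Measure.pi fun _ => μ) := by
  letI : MeasureSpace α := ⟨μ⟩
  haveI : SigmaFinite (volume : Measure α) := inferInstanceAs (SigmaFinite μ)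
  exact MeasureTheory.Integrable.fin_nat_prod hf


def sidx (N p : ℕ) : Fin N ⊕ Fin p → ℕ := Sum.elim (fun k => (k : ℕ)) (fun l => N + (l : ℕ))

@[simp] lemma sidx_inl (N p : ℕ) (k : Fin N) : sidx N p (Sum.inl k) = (k : ℕ) := rfl
@[simp] lemma sidx_inr (N p : ℕ) (l : Fin p) : sidx N p (Sum.inr l) = N + (l : ℕ) := rfl

end CharPolyAux

open CharPolyAux Equiv Polynomial

set_option maxHeartbeats 2000000 in
/-- For the β = 2 ensemble `ME_{2,N}[w]` with monic orthogonal polynomials `(p_j)`,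
the average of a product of `p` characteristic polynomials at pairwise distinct points
`x_1, …, x_p` equals `det[p_{N+j−1}(x_k)] / ∏_{j<k} (x_k − x_j)`. -/
theorem product_char_poly_determinant_formula
    (I : Set ℝ) (hI : MeasurableSet I) (w : ℝ → ℝ) (hw : ∀ t ∈ I, 0 ≤ w t)
    (hmom : ∀ j : ℕ, IntegrableOn (fun t => w t * t ^ j) I)
    (P : ℕ → Polynomial ℝ)
    (hmonic : ∀ j, (P j).Monic) (hdeg : ∀ j, (P j).natDegree = j)
    (horth : ∀ j k, j ≠ k → (∫ t in I, w t * (P j).eval t * (P k).eval t) = 0)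
    (hnorm : ∀ j, 0 < ∫ t in I, w t * (P j).eval t ^ 2)
    (N p : ℕ) (x : Fin p → ℝ) (hx : Function.Injective x)
    (hZ : 0 < ∫ lam in Set.univ.pi (fun _ : Fin N => I),
        (∏ l, w (lam l)) * (∏ j, ∏ k ∈ Finset.Ioi j, (lam k - lam j)) ^ 2) :
    (∫ lam in Set.univ.pi (fun _ : Fin N => I),
        (∏ l, ∏ m, (x l - lam m)) *
          ((∏ l, w (lam l)) * (∏ j, ∏ k ∈ Finset.Ioi j, (lam k - lam j)) ^ 2)) /
      (∫ lam in Set.univ.pi (fun _ : Fin N => I),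
        (∏ l, w (lam l)) * (∏ j, ∏ k ∈ Finset.Ioi j, (lam k - lam j)) ^ 2)
      = (Matrix.of fun j k : Fin p => (P (N + j.val)).eval (x k)).det /
          ∏ j, ∏ k ∈ Finset.Ioi j, (x k - x j) := by
  classical
  clear hZ
  set μ : Measure ℝ := volume.restrict I with hmu
  -- integrability of w times a polynomial
  have hint : ∀ q : Polynomial ℝ, Integrable (fun t => w t * q.eval t) μ := by
    intro q
    have hrepr : (fun t => w t * q.eval t) =
        fun t => ∑ i ∈ Finset.range (q.natDegree + 1), q.coeff i * (w t * t ^ i) := by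
      funext t
      rw [Polynomial.eval_eq_sum_range, Finset.mul_sum]
      exact Finset.sum_congr rfl fun i _ => by ring
    rw [hrepr]
    exact integrable_finset_sum _ fun i _ => (hmom i).const_mul _
  -- the moment matrix
  set m : ℕ → ℕ → ℝ := fun i j => ∫ t, w t * ((P i).eval t * (P j).eval t) ∂μ with hmdef
  have hm0 : ∀ i j : ℕ, i ≠ j → m i j = 0 := by
    intro i j hij
    have h1 : m i j = ∫ t in I, w t * (P i).eval t * (P j).eval t := by
      simp only [hmdef, hmu, mul_assoc]
    rw [h1, horth i j hij]
  have hmpos : ∀ j : ℕ, 0 < m j j := by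
    intro j
    have h1 : m j j = ∫ t in I, w t * (P j).eval t ^ 2 := by
      simp only [hmdef, hmu, sq, mul_assoc]
    rw [h1]; exact hnorm j
  -- rewrite the restricted measure as a product measure
  have hrw : (volume : Measure (Fin N → ℝ)).restrict (Set.univ.pi fun _ => I)
      = Measure.pi fun _ : Fin N => μ := by
    rw [MeasureTheory.volume_pi]
    exact CharPolyAux.restrict_pi_pi volume I hI
  rw [hrw]
  -- determinantal expansion of the Vandermonde product
  have hdetPm : ∀ lam : Fin N → ℝ,
      (∏ j, ∏ k ∈ Finset.Ioi j, (lam k - lam j)) =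
        ∑ σ : Equiv.Perm (Fin N), ((Equiv.Perm.sign σ : ℤ) : ℝ) *
          ∏ i, (P ((σ i : Fin N) : ℕ)).eval (lam i) := by
    intro lam
    rw [← Matrix.det_vandermonde lam,
      Matrix.det_eval_matrixOfPolynomials_eq_det_vandermonde lam (fun j : Fin N => P (j : ℕ))
        (fun i => hdeg i) (fun i => hmonic i),
      ← Matrix.det_transpose, Matrix.det_apply']
    rfl
  -- generic integrability of the coordinatewise products
  have hTermInt : ∀ a b : Fin N → ℕ, Integrable
      (fun lam : Fin N → ℝ =>
        ∏ i, (w (lam i) * ((P (a i)).eval (lam i) * (P (b i)).eval (lam i))))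
      (Measure.pi fun _ : Fin N => μ) := by
    intro a b
    refine CharPolyAux.integrable_pi_prod μ
      (fun i t => w t * ((P (a i)).eval t * (P (b i)).eval t)) (fun i => ?_)
    have h1 := hint ((P (a i)) * (P (b i)))
    simpa only [Polynomial.eval_mul] using h1
  have hTermVal : ∀ a b : Fin N → ℕ,
      (∫ lam : Fin N → ℝ,
        (∏ i, (w (lam i) * ((P (a i)).eval (lam i) * (P (b i)).eval (lam i))))
        ∂(Measure.pi fun _ : Fin N => μ))
      = ∏ i, m (a i) (b i) := by
    intro a b
    exact CharPolyAux.integral_pi_prod μ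
      (fun i t => w t * ((P (a i)).eval t * (P (b i)).eval t))
  -- the denominator
  have hDen : (∫ lam : Fin N → ℝ,
      (∏ l, w (lam l)) * (∏ j, ∏ k ∈ Finset.Ioi j, (lam k - lam j)) ^ 2
      ∂(Measure.pi fun _ : Fin N => μ))
      = (N.factorial : ℝ) * ∏ j : Fin N, m (j : ℕ) (j : ℕ) := by
    have h1 : ∀ lam : Fin N → ℝ,
        (∏ l, w (lam l)) * (∏ j, ∏ k ∈ Finset.Ioi j, (lam k - lam j)) ^ 2 =
        ∑ σ : Equiv.Perm (Fin N), ∑ τ : Equiv.Perm (Fin N),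
          (((Equiv.Perm.sign σ : ℤ) : ℝ) * ((Equiv.Perm.sign τ : ℤ) : ℝ)) *
            ∏ i, (w (lam i) * ((P ((σ i : Fin N) : ℕ)).eval (lam i) *
              (P ((τ i : Fin N) : ℕ)).eval (lam i))) := by
      intro lam
      rw [hdetPm lam, sq, Finset.sum_mul_sum, Finset.mul_sum]
      refine Finset.sum_congr rfl fun σ _ => ?_
      rw [Finset.mul_sum]
      refine Finset.sum_congr rfl fun τ _ => ?_
      simp only [Finset.prod_mul_distrib]
      ring
    simp_rw [h1]
    rw [integral_finset_sum _ (fun σ _ => integrable_finset_sum _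
      (fun τ _ => ((hTermInt (fun i => ((σ i : Fin N) : ℕ)) (fun i => ((τ i : Fin N) : ℕ))).const_mul _)))]
    have h2 : ∀ σ : Equiv.Perm (Fin N),
        (∫ lam : Fin N → ℝ, ∑ τ : Equiv.Perm (Fin N),
          (((Equiv.Perm.sign σ : ℤ) : ℝ) * ((Equiv.Perm.sign τ : ℤ) : ℝ)) *
            ∏ i, (w (lam i) * ((P ((σ i : Fin N) : ℕ)).eval (lam i) *
              (P ((τ i : Fin N) : ℕ)).eval (lam i)))
          ∂(Measure.pi fun _ : Fin N => μ))
        = ∏ j : Fin N, m (j : ℕ) (j : ℕ) := by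
      intro σ
      rw [integral_finset_sum _
        (fun τ _ => ((hTermInt (fun i => ((σ i : Fin N) : ℕ)) (fun i => ((τ i : Fin N) : ℕ))).const_mul _))]
      have h3 : ∀ τ : Equiv.Perm (Fin N),
          (∫ lam : Fin N → ℝ,
            (((Equiv.Perm.sign σ : ℤ) : ℝ) * ((Equiv.Perm.sign τ : ℤ) : ℝ)) *
              ∏ i, (w (lam i) * ((P ((σ i : Fin N) : ℕ)).eval (lam i) *
                (P ((τ i : Fin N) : ℕ)).eval (lam i)))
            ∂(Measure.pi fun _ : Fin N => μ))
          = (((Equiv.Perm.sign σ : ℤ) : ℝ) * ((Equiv.Perm.sign τ : ℤ) : ℝ)) *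
              ∏ i, m ((σ i : Fin N) : ℕ) ((τ i : Fin N) : ℕ) := by
        intro τ
        rw [MeasureTheory.integral_const_mul, hTermVal]
      simp_rw [h3]
      rw [Finset.sum_eq_single σ]
      · have h4 : ∏ i, m ((σ i : Fin N) : ℕ) ((σ i : Fin N) : ℕ)
            = ∏ j : Fin N, m (j : ℕ) (j : ℕ) :=
          Equiv.prod_comp σ (fun j : Fin N => m (j : ℕ) (j : ℕ))
        rw [h4]
        rcases Int.units_eq_one_or (Equiv.Perm.sign σ) with h | h <;> simp [h]
      · intro τ _ hτ
        obtain ⟨i, hi⟩ : ∃ i, τ i ≠ σ i := by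
          by_contra hc
          push_neg at hc
          exact hτ (Equiv.ext hc)
        refine mul_eq_zero_of_right _ (Finset.prod_eq_zero (Finset.mem_univ i) ?_)
        exact hm0 _ _ (fun h => hi (Fin.val_injective h).symm)
      · intro h
        exact absurd (Finset.mem_univ σ) h
    simp_rw [h2]
    rw [Finset.sum_const, Finset.card_univ, Fintype.card_perm, Fintype.card_fin, nsmul_eq_mul]

  -- positivity and nonvanishing
  have hprodpos : 0 < ∏ j : Fin N, m (j : ℕ) (j : ℕ) := Finset.prod_pos fun j _ => hmpos j
  have hDpos : 0 < (N.factorial : ℝ) * ∏ j : Fin N, m (j : ℕ) (j : ℕ) :=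
    mul_pos (by exact_mod_cast Nat.factorial_pos N) hprodpos
  have hvx : (∏ j, ∏ k ∈ Finset.Ioi j, (x k - x j)) ≠ 0 := by
    refine Finset.prod_ne_zero_iff.mpr fun j _ => Finset.prod_ne_zero_iff.mpr fun k hk => ?_
    have hjk : j < k := Finset.mem_Ioi.mp hk
    exact sub_ne_zero_of_ne fun h => hjk.ne' (hx h)
  -- expansion of the big Vandermonde determinant
  have hdetG : ∀ lam : Fin N → ℝ, vdm (Fin.append lam x)
      = ∑ ρ : Equiv.Perm (Fin N ⊕ Fin p), ((Equiv.Perm.sign ρ : ℤ) : ℝ) *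
          ((∏ k, (P (sidx N p (ρ (Sum.inl k)))).eval (lam k)) *
            ∏ l, (P (sidx N p (ρ (Sum.inr l)))).eval (x l)) := by
    intro lam
    have e1 : vdm (Fin.append lam x) =
        (Matrix.of fun s t : Fin (N + p) =>
          (P ((t : Fin (N + p)) : ℕ)).eval (Fin.append lam x s)).det := by
      simp only [CharPolyAux.vdm]
      rw [← Matrix.det_vandermonde (Fin.append lam x),
        Matrix.det_eval_matrixOfPolynomials_eq_det_vandermonde (Fin.append lam x)
          (fun t : Fin (N + p) => P (t : ℕ)) (fun i => hdeg i) (fun i => hmonic i)]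
    rw [e1, ← Matrix.det_submatrix_equiv_self finSumFinEquiv, ← Matrix.det_transpose,
      Matrix.det_apply']
    refine Finset.sum_congr rfl fun ρ _ => ?_
    congr 1
    rw [Fintype.prod_sum_type]
    congr 1
    · refine Finset.prod_congr rfl fun k _ => ?_
      rcases hr : ρ (Sum.inl k) with j | l <;>
        simp [hr, Matrix.submatrix_apply, Matrix.transpose_apply,
          finSumFinEquiv_apply_left, finSumFinEquiv_apply_right,
          Fin.append_left, Fin.append_right]
    · refine Finset.prod_congr rfl fun l _ => ?_
      rcases hr : ρ (Sum.inr l) with j | l' <;>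
        simp [hr, Matrix.submatrix_apply, Matrix.transpose_apply,
          finSumFinEquiv_apply_left, finSumFinEquiv_apply_right,
          Fin.append_left, Fin.append_right]
  -- the numerator times the Vandermonde of x
  have hNum : (∫ lam : Fin N → ℝ,
        (∏ l, ∏ m', (x l - lam m')) *
          ((∏ l, w (lam l)) * (∏ j, ∏ k ∈ Finset.Ioi j, (lam k - lam j)) ^ 2)
        ∂(Measure.pi fun _ : Fin N => μ)) * (∏ j, ∏ k ∈ Finset.Ioi j, (x k - x j))
      = ((N.factorial : ℝ) * ∏ j : Fin N, m (j : ℕ) (j : ℕ)) *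
          (Matrix.of fun j k : Fin p => (P (N + j.val)).eval (x k)).det := by
    rw [← MeasureTheory.integral_mul_const]
    have h1 : ∀ lam : Fin N → ℝ,
        ((∏ l, ∏ m', (x l - lam m')) *
          ((∏ l, w (lam l)) * (∏ j, ∏ k ∈ Finset.Ioi j, (lam k - lam j)) ^ 2)) *
          (∏ j, ∏ k ∈ Finset.Ioi j, (x k - x j))
        = ∑ σ : Equiv.Perm (Fin N), ∑ ρ : Equiv.Perm (Fin N ⊕ Fin p),
            ((((Equiv.Perm.sign ρ : ℤ) : ℝ) * ((Equiv.Perm.sign σ : ℤ) : ℝ)) *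
              (∏ l, (P (sidx N p (ρ (Sum.inr l)))).eval (x l))) *
              ∏ k, (w (lam k) * ((P ((σ k : Fin N) : ℕ)).eval (lam k) *
                (P (sidx N p (ρ (Sum.inl k)))).eval (lam k))) := by
      intro lam
      have e2 : ((∏ l, ∏ m', (x l - lam m')) *
          ((∏ l, w (lam l)) * (∏ j, ∏ k ∈ Finset.Ioi j, (lam k - lam j)) ^ 2)) *
          (∏ j, ∏ k ∈ Finset.Ioi j, (x k - x j))
          = (∏ l, w (lam l)) * ((∏ j, ∏ k ∈ Finset.Ioi j, (lam k - lam j)) *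
              vdm (Fin.append lam x)) := by
        rw [vdm_append lam x]
        simp only [CharPolyAux.vdm]
        ring
      rw [e2, hdetPm lam, hdetG lam, Finset.sum_mul_sum, Finset.mul_sum]
      refine Finset.sum_congr rfl fun σ _ => ?_
      rw [Finset.mul_sum]
      refine Finset.sum_congr rfl fun ρ _ => ?_
      simp only [Finset.prod_mul_distrib]
      ring
    simp_rw [h1]
    rw [integral_finset_sum _ (fun σ _ => integrable_finset_sum _ (fun ρ _ =>
      ((hTermInt (fun k => ((σ k : Fin N) : ℕ))
        (fun k => sidx N p (ρ (Sum.inl k)))).const_mul _)))]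
    have h2 : ∀ σ : Equiv.Perm (Fin N),
        (∫ lam : Fin N → ℝ, ∑ ρ : Equiv.Perm (Fin N ⊕ Fin p),
            ((((Equiv.Perm.sign ρ : ℤ) : ℝ) * ((Equiv.Perm.sign σ : ℤ) : ℝ)) *
              (∏ l, (P (sidx N p (ρ (Sum.inr l)))).eval (x l))) *
              ∏ k, (w (lam k) * ((P ((σ k : Fin N) : ℕ)).eval (lam k) *
                (P (sidx N p (ρ (Sum.inl k)))).eval (lam k)))
          ∂(Measure.pi fun _ : Fin N => μ))
        = ∑ ρ : Equiv.Perm (Fin N ⊕ Fin p),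
            ((((Equiv.Perm.sign ρ : ℤ) : ℝ) * ((Equiv.Perm.sign σ : ℤ) : ℝ)) *
              (∏ l, (P (sidx N p (ρ (Sum.inr l)))).eval (x l))) *
              ∏ k, m ((σ k : Fin N) : ℕ) (sidx N p (ρ (Sum.inl k))) := by
      intro σ
      rw [integral_finset_sum _ (fun ρ _ =>
        ((hTermInt (fun k => ((σ k : Fin N) : ℕ))
          (fun k => sidx N p (ρ (Sum.inl k)))).const_mul _))]
      refine Finset.sum_congr rfl fun ρ _ => ?_
      rw [MeasureTheory.integral_const_mul, hTermVal]
    simp_rw [h2]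
    rw [Finset.sum_comm]
    set g : Equiv.Perm (Fin N) × Equiv.Perm (Fin p) → Equiv.Perm (Fin N ⊕ Fin p) :=
      fun q => Equiv.sumCongr q.1 q.2 with hg
    have hginj : Function.Injective g := fun a b hab =>
      Equiv.Perm.sumCongrHom_injective (α := Fin N) (β := Fin p) hab
    have hzero : ∀ ρ : Equiv.Perm (Fin N ⊕ Fin p), ρ ∉ Finset.image g Finset.univ →
        (∑ σ : Equiv.Perm (Fin N),
          ((((Equiv.Perm.sign ρ : ℤ) : ℝ) * ((Equiv.Perm.sign σ : ℤ) : ℝ)) *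
            (∏ l, (P (sidx N p (ρ (Sum.inr l)))).eval (x l))) *
            ∏ k, m ((σ k : Fin N) : ℕ) (sidx N p (ρ (Sum.inl k)))) = 0 := by
      intro ρ hρ
      have hnotin : ∃ k0 : Fin N, ∃ l0 : Fin p, ρ (Sum.inl k0) = Sum.inr l0 := by
        by_contra hc
        push_neg at hc
        have hmap : Set.MapsTo ρ (Set.range Sum.inl) (Set.range Sum.inl) := by
          rintro s ⟨k, rfl⟩
          rcases hs : ρ (Sum.inl k) with j | l
          · exact ⟨j, rfl⟩
          · exact absurd hs (hc k l)
        obtain ⟨q, hq⟩ := Equiv.Perm.mem_sumCongrHom_range_of_perm_mapsTo_inl hmap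
        exact hρ (Finset.mem_image.mpr ⟨q, Finset.mem_univ q, hq⟩)
      obtain ⟨k0, l0, hk0⟩ := hnotin
      refine Finset.sum_eq_zero fun σ _ => ?_
      refine mul_eq_zero_of_right _ (Finset.prod_eq_zero (Finset.mem_univ k0) ?_)
      rw [hk0]
      refine hm0 _ _ ?_
      simp only [sidx_inr]
      have := (σ k0).isLt
      omega
    rw [← Finset.sum_subset (Finset.subset_univ (Finset.image g Finset.univ))
      (fun ρ _ hρ => hzero ρ hρ),
      Finset.sum_image (fun a _ b _ hab => hginj hab)]
    rw [Fintype.sum_prod_type]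
    have h6 : ∀ (σ0 : Equiv.Perm (Fin N)) (π : Equiv.Perm (Fin p)),
        (∑ σ : Equiv.Perm (Fin N),
          ((((Equiv.Perm.sign (g (σ0, π)) : ℤ) : ℝ) * ((Equiv.Perm.sign σ : ℤ) : ℝ)) *
            (∏ l, (P (sidx N p (g (σ0, π) (Sum.inr l)))).eval (x l))) *
            ∏ k, m ((σ k : Fin N) : ℕ) (sidx N p (g (σ0, π) (Sum.inl k))))
        = (((Equiv.Perm.sign π : ℤ) : ℝ) *
            ∏ l, (P (N + ((π l : Fin p) : ℕ))).eval (x l)) *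
            ∏ j : Fin N, m (j : ℕ) (j : ℕ) := by
      intro σ0 π
      have hsimp1 : ∀ l : Fin p, sidx N p (g (σ0, π) (Sum.inr l)) = N + ((π l : Fin p) : ℕ) := by
        intro l; simp [hg]
      have hsimp2 : ∀ k : Fin N, sidx N p (g (σ0, π) (Sum.inl k)) = ((σ0 k : Fin N) : ℕ) := by
        intro k; simp [hg]
      have hsign : ((Equiv.Perm.sign (g (σ0, π)) : ℤ) : ℝ)
          = ((Equiv.Perm.sign σ0 : ℤ) : ℝ) * ((Equiv.Perm.sign π : ℤ) : ℝ) := by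
        simp [hg, Equiv.Perm.sign_sumCongr]
      simp only [hsimp1, hsimp2, hsign]
      rw [Finset.sum_eq_single σ0]
      · rw [Equiv.prod_comp σ0 (fun j : Fin N => m (j : ℕ) (j : ℕ))]
        rcases Int.units_eq_one_or (Equiv.Perm.sign σ0) with h | h <;>
          rcases Int.units_eq_one_or (Equiv.Perm.sign π) with h' | h' <;>
            simp [h, h'] <;> ring
      · intro τ _ hτ
        obtain ⟨i, hi⟩ : ∃ i, τ i ≠ σ0 i := by
          by_contra hc
          push_neg at hc
          exact hτ (Equiv.ext hc)
        refine mul_eq_zero_of_right _ (Finset.prod_eq_zero (Finset.mem_univ i) ?_)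
        exact hm0 _ _ (fun h => hi (Fin.val_injective h))
      · intro h
        exact absurd (Finset.mem_univ σ0) h
    simp_rw [h6]
    rw [Finset.sum_const, Finset.card_univ, Fintype.card_perm, Fintype.card_fin, nsmul_eq_mul]
    have hdetX : (Matrix.of fun j k : Fin p => (P (N + j.val)).eval (x k)).det
        = ∑ π : Equiv.Perm (Fin p), ((Equiv.Perm.sign π : ℤ) : ℝ) *
            ∏ k, (P (N + ((π k : Fin p) : ℕ))).eval (x k) := by
      rw [Matrix.det_apply']
      rfl
    rw [hdetX, ← Finset.sum_mul]
    ring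
  rw [hDen, div_eq_div_iff hDpos.ne' hvx, hNum]
  ring
end

section
/- The Wronskian-type determinant of Laguerre polynomials equals, up to sign, a Toeplitz-type determinant of shifted Laguerre polynomials: det[(d/dx)^{k−1} L_{N+j−1}^{(a)}(x)]_{j,k=1,…,p} = (−1)^{p(p−1)/2} det[L_{N+j−k}^{(a+k−j)}(x)]_{j,k=1,…,p}. -/
open MeasureTheory

/-- The generalized Laguerre polynomial `L_n^{(a)}(x)`, with real parameter `a`,
defined by `L_n^{(a)}(x) = Σ_{k=0}^n (−1)^k binom(n+a, n−k) x^k / k!`, where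
`binom(n+a, n−k) = (∏_{i=k+1}^n (a+i)) / (n−k)!`. -/
noncomputable def genLaguerre (n : ℕ) (a : ℝ) (x : ℝ) : ℝ :=
  ∑ k ∈ Finset.range (n + 1),
    (-1) ^ k / (Nat.factorial k : ℝ) *
      ((∏ i ∈ Finset.Icc (k + 1) n, (a + (i : ℝ))) / (Nat.factorial (n - k) : ℝ)) *
      x ^ k

lemma prod_shift (a : ℝ) (k n : ℕ) :
    ∏ i ∈ Finset.Icc (k+1) n, (a + 1 + (i : ℝ)) = ∏ i ∈ Finset.Icc (k+2) (n+1), (a + (i : ℝ)) := by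
  rw [← Finset.map_add_right_Icc (k+1) n 1, Finset.prod_map]
  apply Finset.prod_congr rfl
  intro i _
  simp only [addRightEmbedding_apply]
  push_cast
  ring

lemma prod_bot (a : ℝ) (k m : ℕ) (h : k + 1 ≤ m) :
    ∏ i ∈ Finset.Icc (k+1) m, (a + (i : ℝ))
      = (a + ((k+1 : ℕ) : ℝ)) * ∏ i ∈ Finset.Icc (k+2) m, (a + (i : ℝ)) := by
  rw [← Finset.Ioc_insert_left h, ← Finset.Icc_add_one_left_eq_Ioc, Finset.prod_insert (by simp)]
  rfl

lemma genLaguerre_rec (n : ℕ) (a x : ℝ) :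
    genLaguerre (n+1) a x = genLaguerre (n+1) (a+1) x - genLaguerre n (a+1) x := by
  unfold genLaguerre
  rw [Finset.sum_range_succ, Finset.sum_range_succ
    (f := fun k => (-1) ^ k / (Nat.factorial k : ℝ) *
      ((∏ i ∈ Finset.Icc (k + 1) (n+1), (a + 1 + (i : ℝ))) / (Nat.factorial (n + 1 - k) : ℝ)) *
      x ^ k) (n := n+1)]
  have hlast : ((-1:ℝ)) ^ (n+1) / (Nat.factorial (n+1) : ℝ) *
      ((∏ i ∈ Finset.Icc (n+2) (n+1), (a + (i : ℝ))) / (Nat.factorial (n + 1 - (n+1)) : ℝ)) *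
      x ^ (n+1) = ((-1:ℝ)) ^ (n+1) / (Nat.factorial (n+1) : ℝ) *
      ((∏ i ∈ Finset.Icc (n+2) (n+1), (a + 1 + (i : ℝ))) / (Nat.factorial (n + 1 - (n+1)) : ℝ)) *
      x ^ (n+1) := by
    rw [Finset.Icc_eq_empty (by omega)]
    simp
  rw [hlast]
  have hmain : ∀ k ∈ Finset.range (n+1),
      (-1:ℝ) ^ k / (Nat.factorial k : ℝ) *
        ((∏ i ∈ Finset.Icc (k + 1) (n+1), (a + (i : ℝ))) / (Nat.factorial (n + 1 - k) : ℝ)) * x ^ k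
      = (-1:ℝ) ^ k / (Nat.factorial k : ℝ) *
        ((∏ i ∈ Finset.Icc (k + 1) (n+1), (a + 1 + (i : ℝ))) / (Nat.factorial (n + 1 - k) : ℝ)) * x ^ k
        - (-1:ℝ) ^ k / (Nat.factorial k : ℝ) *
        ((∏ i ∈ Finset.Icc (k + 1) n, (a + 1 + (i : ℝ))) / (Nat.factorial (n - k) : ℝ)) * x ^ k := by
    intro k hk
    rw [Finset.mem_range] at hk
    have hk' : k ≤ n := by omega
    rw [prod_shift a k (n+1), prod_shift a k n,
      prod_bot a k (n+1) (by omega),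
      Finset.prod_Icc_succ_top (show k+2 ≤ n+2 by omega),
      show n + 1 - k = (n - k) + 1 by omega, Nat.factorial_succ]
    have hF : ((Nat.factorial (n-k) : ℝ)) ≠ 0 := Nat.cast_ne_zero.mpr (Nat.factorial_ne_zero _)
    have hK : ((Nat.factorial k : ℝ)) ≠ 0 := Nat.cast_ne_zero.mpr (Nat.factorial_ne_zero _)
    have hnk : ((n - k : ℕ) : ℝ) = (n : ℝ) - k := by
      push_cast [hk']; ring
    have hn1 : ((n:ℝ) - (k:ℝ) + 1) ≠ 0 := by
      have : (k:ℝ) ≤ (n:ℝ) := Nat.cast_le.mpr hk'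
      intro hcon; linarith
    push_cast [hnk]
    field_simp
    ring
  rw [Finset.sum_congr rfl hmain, Finset.sum_sub_distrib]
  ring

lemma genLaguerre_hasDerivAt (n : ℕ) (a x : ℝ) :
    HasDerivAt (genLaguerre (n+1) a) (-genLaguerre n (a+1) x) x := by
  have h : HasDerivAt (genLaguerre (n+1) a)
      (∑ k ∈ Finset.range (n+2),
        (-1) ^ k / (Nat.factorial k : ℝ) *
          ((∏ i ∈ Finset.Icc (k + 1) (n+1), (a + (i : ℝ))) / (Nat.factorial (n + 1 - k) : ℝ)) *
          ((k : ℝ) * x ^ (k-1))) x := by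
    apply HasDerivAt.fun_sum
    intro k _
    exact (hasDerivAt_pow k x).const_mul _
  convert h using 1
  rw [Finset.sum_range_succ' _ (n+1)]
  have h0 : (-1:ℝ) ^ 0 / (Nat.factorial 0 : ℝ) *
      ((∏ i ∈ Finset.Icc (0 + 1) (n+1), (a + (i : ℝ))) / (Nat.factorial (n + 1 - 0) : ℝ)) *
      (((0:ℕ) : ℝ) * x ^ (0-1)) = 0 := by simp
  rw [h0, add_zero]
  unfold genLaguerre
  rw [neg_eq_iff_eq_neg, ← Finset.sum_neg_distrib]
  apply Finset.sum_congr rfl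
  intro k hk
  rw [Finset.mem_range] at hk
  have hk' : k ≤ n := by omega
  rw [show n + 1 - (k+1) = n - k by omega, prod_shift a k n, Nat.factorial_succ]
  have hF : ((Nat.factorial (n-k) : ℝ)) ≠ 0 := Nat.cast_ne_zero.mpr (Nat.factorial_ne_zero _)
  have hK : ((Nat.factorial k : ℝ)) ≠ 0 := Nat.cast_ne_zero.mpr (Nat.factorial_ne_zero _)
  have hKK : ((k:ℝ)+1) ≠ 0 := by positivity
  simp only [Nat.add_sub_cancel]
  push_cast
  field_simp
  ring

lemma genLaguerre_iteratedDeriv (k : ℕ) : ∀ (n : ℕ) (a : ℝ), k ≤ n →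
    iteratedDeriv k (genLaguerre n a)
      = fun x => (-1:ℝ)^k * genLaguerre (n-k) (a + k) x := by
  induction k with
  | zero => intro n a _; simp [iteratedDeriv_zero]
  | succ k ih =>
    intro n a h
    obtain ⟨m, rfl⟩ : ∃ m, n = m + 1 := ⟨n - 1, by omega⟩
    funext y
    rw [iteratedDeriv_succ']
    have hd : deriv (genLaguerre (m+1) a) = fun x => -genLaguerre m (a+1) x := by
      funext z; exact (genLaguerre_hasDerivAt m a z).deriv
    rw [hd, iteratedDeriv_fun_neg, ih m (a+1) (by omega)]
    rw [show m + 1 - (k+1) = m - k by omega,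
      show a + ((k:ℕ)+1 : ℕ) = a + 1 + (k : ℝ) by push_cast; ring]
    simp [pow_succ]

lemma alt_pascal (m : ℕ) (g : ℕ → ℝ) :
    ∑ i ∈ Finset.range (m+2), (-1:ℝ)^i * ((m+1).choose i : ℝ) * g i
      = ∑ i ∈ Finset.range (m+1), (-1:ℝ)^i * (m.choose i : ℝ) * g i
        - ∑ i ∈ Finset.range (m+1), (-1:ℝ)^i * (m.choose i : ℝ) * g (i+1) := by
  have h1 : ∑ i ∈ Finset.range (m+2), (-1:ℝ)^i * ((m+1).choose i : ℝ) * g i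
      = ∑ i ∈ Finset.range (m+1), ((-1:ℝ)^(i+1) * (m.choose i : ℝ) * g (i+1)
          + (-1:ℝ)^(i+1) * (m.choose (i+1) : ℝ) * g (i+1)) + g 0 := by
    rw [Finset.sum_range_succ' _ (m+1)]
    congr 1
    · apply Finset.sum_congr rfl
      intro i _
      rw [Nat.choose_succ_succ]
      push_cast
      ring
    · simp
  have h2 : ∑ i ∈ Finset.range (m+1), (-1:ℝ)^i * (m.choose i : ℝ) * g i
      = ∑ i ∈ Finset.range (m+1), (-1:ℝ)^(i+1) * (m.choose (i+1) : ℝ) * g (i+1) + g 0 := by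
    rw [Finset.sum_range_succ' _ m, Finset.sum_range_succ
      (f := fun i => (-1:ℝ)^(i+1) * (m.choose (i+1) : ℝ) * g (i+1))]
    simp [Nat.choose_succ_self]
  have h3 : ∑ i ∈ Finset.range (m+1), (-1:ℝ)^(i+1) * (m.choose i : ℝ) * g (i+1)
      = - ∑ i ∈ Finset.range (m+1), (-1:ℝ)^i * (m.choose i : ℝ) * g (i+1) := by
    rw [← Finset.sum_neg_distrib]
    apply Finset.sum_congr rfl
    intro i _
    ring
  rw [h1, h2, Finset.sum_add_distrib, h3]
  ring

lemma binom_expand (m : ℕ) : ∀ (n : ℕ) (b x : ℝ), m ≤ n →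
    genLaguerre n b x
      = ∑ i ∈ Finset.range (m+1), (-1:ℝ)^i * (m.choose i : ℝ) * genLaguerre (n-i) (b + m) x := by
  induction m with
  | zero => intro n b x _; simp
  | succ m ih =>
    intro n b x h
    obtain ⟨n', rfl⟩ : ∃ n', n = n' + 1 := ⟨n - 1, by omega⟩
    rw [genLaguerre_rec n' b x, ih (n'+1) (b+1) x (by omega), ih n' (b+1) x (by omega)]
    have hpar : b + 1 + (m : ℝ) = b + ((m+1 : ℕ) : ℝ) := by push_cast; ring
    rw [alt_pascal m (fun i => genLaguerre (n'+1-i) (b + ((m+1:ℕ) : ℝ)) x)]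
    simp only [hpar]
    congr 1
    apply Finset.sum_congr rfl
    intro i _
    rw [show n' + 1 - (i+1) = n' - i by omega]

/-- The Wronskian-type determinant of Laguerre polynomials equals, up to sign,
a Toeplitz-type determinant of shifted Laguerre polynomials:
`det[(d/dx)^{k−1} L_{N+j−1}^{(a)}(x)] = (−1)^{p(p−1)/2} det[L_{N+j−k}^{(a+k−j)}(x)]`. -/
theorem laguerre_wronskian_toeplitz (p N : ℕ) (hp : p ≤ N + 1) (a x : ℝ) :
    (Matrix.of fun j k : Fin p =>
        iteratedDeriv k.val (genLaguerre (N + j.val) a) x).det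
      = (-1) ^ (p * (p - 1) / 2) *
        (Matrix.of fun j k : Fin p =>
          genLaguerre (N + j.val - k.val) (a + (k.val : ℝ) - (j.val : ℝ)) x).det := by
  set A : Matrix (Fin p) (Fin p) ℝ :=
    Matrix.of fun j k : Fin p => genLaguerre (N + j.val - k.val) (a + (k.val : ℝ)) x with hA
  set T : Matrix (Fin p) (Fin p) ℝ :=
    Matrix.of fun j i : Fin p =>
      if i.val ≤ j.val then (-1:ℝ)^(j.val - i.val) * ((j.val).choose (j.val - i.val) : ℝ)
      else 0 with hT
  -- Step 1: the LHS matrix has entries (-1)^k * A j k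
  have hL : (Matrix.of fun j k : Fin p =>
      iteratedDeriv k.val (genLaguerre (N + j.val) a) x)
      = Matrix.of fun j k : Fin p => (-1:ℝ)^k.val * A j k := by
    ext j k
    have hk : k.val ≤ N + j.val := by have := k.isLt; omega
    simp only [Matrix.of_apply, hA]
    rw [genLaguerre_iteratedDeriv k.val (N + j.val) a hk]
  rw [hL, Matrix.det_mul_row (fun k : Fin p => (-1:ℝ)^k.val) A]
  -- the sign
  have hsign : (∏ k : Fin p, (-1:ℝ)^k.val) = (-1:ℝ) ^ (p * (p-1) / 2) := by
    rw [Finset.prod_pow_eq_pow_sum]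
    congr 1
    rw [Fin.sum_univ_eq_sum_range (fun i => i) p, Finset.sum_range_id]
  rw [hsign]
  congr 1
  -- Step 2: Toeplitz matrix = T * A
  have hTA : (Matrix.of fun j k : Fin p =>
      genLaguerre (N + j.val - k.val) (a + (k.val : ℝ) - (j.val : ℝ)) x) = T * A := by
    ext j k
    have hkN : k.val ≤ N := by have := k.isLt; omega
    rw [Matrix.mul_apply, Matrix.of_apply]
    have hconv : ∑ i : Fin p, T j i * A i k
        = ∑ i ∈ Finset.range p, (if i ≤ j.val then
            (-1:ℝ)^(j.val - i) * ((j.val).choose (j.val - i) : ℝ) else 0) *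
            genLaguerre (N + i - k.val) (a + (k.val : ℝ)) x := by
      rw [← Fin.sum_univ_eq_sum_range (fun i => (if i ≤ j.val then
            (-1:ℝ)^(j.val - i) * ((j.val).choose (j.val - i) : ℝ) else 0) *
            genLaguerre (N + i - k.val) (a + (k.val : ℝ)) x) p]
      rfl
    rw [hconv]
    rw [← Finset.sum_subset (Finset.range_subset_range.mpr (show j.val + 1 ≤ p from j.isLt))
      (by intro i _ hi
          rw [Finset.mem_range, not_lt] at hi
          rw [if_neg (by omega), zero_mul])]
    rw [← Finset.sum_range_reflect]
    rw [binom_expand j.val (N + j.val - k.val) (a + (k.val : ℝ) - (j.val : ℝ)) x (by omega)]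
    rw [show a + (k.val : ℝ) - (j.val : ℝ) + (j.val : ℝ) = a + (k.val : ℝ) by ring]
    apply Finset.sum_congr rfl
    intro i hi
    rw [Finset.mem_range] at hi
    have hij : i ≤ j.val := by omega
    rw [show j.val + 1 - 1 - i = j.val - i by omega, if_pos (by omega),
      show j.val - (j.val - i) = i by omega,
      show N + (j.val - i) - k.val = N + j.val - k.val - i by omega]
  rw [hTA, Matrix.det_mul]
  -- det T = 1
  have hTdet : T.det = 1 := by
    have htri : T.BlockTriangular OrderDual.toDual := by
      intro i j hij
      simp only [hT, Matrix.of_apply]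
      rw [if_neg]
      simp only [OrderDual.toDual_lt_toDual] at hij
      omega
    rw [Matrix.det_of_lowerTriangular T htri]
    apply Finset.prod_eq_one
    intro i _
    simp [hT]
  rw [hTdet, one_mul]
end

section
/- Heine's Hankel determinant formula: if α_j := ∫_I a(t) t^j dt for an integrable weight a, then det[α_{j+k}]_{j,k=0,…,n−1} = (1/n!) ∫_{I^n} ∏_{l=1}^n a(x_l) · ∏_{1≤j<k≤n} (x_k − x_j)² dx_1…dx_n. -/
open MeasureTheory Equiv

private lemma heine_restrict_pi_aux {n : ℕ} {I : Set ℝ} (hI : MeasurableSet I) :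
    Measure.pi (fun _ : Fin n => (volume : Measure ℝ).restrict I)
      = (volume : Measure (Fin n → ℝ)).restrict (Set.univ.pi fun _ => I) := by
  refine Measure.pi_eq fun s hs => ?_
  rw [Measure.restrict_apply (MeasurableSet.univ_pi hs)]
  have h1 : Set.univ.pi s ∩ Set.univ.pi (fun _ : Fin n => I)
      = Set.univ.pi fun i => s i ∩ I := Set.pi_inter_distrib.symm
  rw [h1, volume_pi, Measure.pi_pi]
  exact Finset.prod_congr rfl fun i _ => (Measure.restrict_apply (hs i)).symm

private lemma heine_sign_mul_self {n : ℕ} (σ : Perm (Fin n)) :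
    ((Perm.sign σ : ℤ) : ℝ) * ((Perm.sign σ : ℤ) : ℝ) = 1 := by
  rw [← Int.cast_mul, ← Units.val_mul, Int.units_mul_self, Units.val_one, Int.cast_one]

/-- The key algebraic symmetrization identity. -/
private lemma heine_perm_sum (n : ℕ) (α : ℕ → ℝ) :
    ∑ σ : Perm (Fin n), ∑ τ : Perm (Fin n),
        ((((Perm.sign σ : ℤ) : ℝ) * ((Perm.sign τ : ℤ) : ℝ)) * ∏ i, α ((σ i : ℕ) + (τ i : ℕ)))
      = (n.factorial : ℝ) *
        ∑ ρ : Perm (Fin n), ((Perm.sign ρ : ℤ) : ℝ) * ∏ i : Fin n, α ((i : ℕ) + (ρ i : ℕ)) := by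
  have key : ∀ σ : Perm (Fin n),
      ∑ τ : Perm (Fin n),
          ((((Perm.sign σ : ℤ) : ℝ) * ((Perm.sign τ : ℤ) : ℝ)) * ∏ i, α ((σ i : ℕ) + (τ i : ℕ)))
        = ∑ ρ : Perm (Fin n), ((Perm.sign ρ : ℤ) : ℝ) * ∏ i : Fin n, α ((i : ℕ) + (ρ i : ℕ)) := by
    intro σ
    rw [← Equiv.sum_comp (Equiv.mulRight σ)
      (fun τ : Perm (Fin n) =>
        (((Perm.sign σ : ℤ) : ℝ) * ((Perm.sign τ : ℤ) : ℝ)) * ∏ i, α ((σ i : ℕ) + (τ i : ℕ)))]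
    refine Finset.sum_congr rfl fun ρ _ => ?_
    have h1 : (((Perm.sign σ : ℤ) : ℝ) * ((Perm.sign (ρ * σ) : ℤ) : ℝ))
        = ((Perm.sign ρ : ℤ) : ℝ) := by
      rw [map_mul]
      push_cast
      rw [mul_comm ((Perm.sign ρ : ℤ) : ℝ), ← mul_assoc, heine_sign_mul_self, one_mul]
    have h2 : (∏ i : Fin n, α ((σ i : ℕ) + (((ρ * σ) i : Fin n) : ℕ)))
        = ∏ i : Fin n, α ((i : ℕ) + (ρ i : ℕ)) := by
      rw [← Equiv.prod_comp σ (fun j : Fin n => α ((j : ℕ) + (ρ j : ℕ)))]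
      simp only [Perm.mul_apply]
    simp only [coe_mulRight]
    rw [h1, h2]
  rw [Finset.sum_congr rfl fun σ _ => key σ, Finset.sum_const, Finset.card_univ,
    Fintype.card_perm, Fintype.card_fin, nsmul_eq_mul]


private lemma heine_perm_sum_inv (n : ℕ) (α : ℕ → ℝ) :
    ∑ σ : Perm (Fin n), ∑ τ : Perm (Fin n),
        ((((Perm.sign σ : ℤ) : ℝ) * ((Perm.sign τ : ℤ) : ℝ)) *
          ∏ i : Fin n, α (((σ⁻¹ i : Fin n) : ℕ) + ((τ⁻¹ i : Fin n) : ℕ)))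
      = (n.factorial : ℝ) *
        ∑ ρ : Perm (Fin n), ((Perm.sign ρ : ℤ) : ℝ) * ∏ i : Fin n, α ((i : ℕ) + (ρ i : ℕ)) := by
  rw [← heine_perm_sum n α]
  refine Fintype.sum_equiv (Equiv.inv (Perm (Fin n))) _ _ fun σ => ?_
  refine Fintype.sum_equiv (Equiv.inv (Perm (Fin n))) _ _ fun τ => ?_
  simp [Perm.sign_inv]

open MeasureTheory

/-- Heine's Hankel determinant formula: with moments `α_j = ∫_I a(t) t^j dt`,
`det[α_{j+k}]_{j,k=0,…,n−1} = (1/n!) ∫_{I^n} ∏ a(x_l) ∏_{j<k} (x_k − x_j)² dx`. -/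
theorem heine_hankel_determinant
    (I : Set ℝ) (hI : MeasurableSet I) (a : ℝ → ℝ)
    (hmom : ∀ j : ℕ, IntegrableOn (fun t => a t * t ^ j) I)
    (n : ℕ) :
    (Matrix.of fun j k : Fin n => ∫ t in I, a t * t ^ (j.val + k.val)).det
      = (1 / (Nat.factorial n : ℝ)) *
        ∫ x in Set.univ.pi (fun _ : Fin n => I),
          (∏ l, a (x l)) * (∏ j, ∏ k ∈ Finset.Ioi j, (x k - x j)) ^ 2 := by
  classical
  set μ : Measure ℝ := (volume : Measure ℝ).restrict I with hμdef
  set π : Measure (Fin n → ℝ) := Measure.pi (fun _ : Fin n => μ) with hπdef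
  set α : ℕ → ℝ := fun j => ∫ t in I, a t * t ^ j with hαdef
  -- integrability and value of monomial integrals
  have hint : ∀ k : Fin n → ℕ,
      Integrable (fun x : Fin n → ℝ => ∏ i, a (x i) * x i ^ k i) π := by
    intro k
    exact Integrable.fintype_prod (f := fun i t => a t * t ^ k i)
      (μ := fun _ => μ) (fun i => hmom (k i))
  have hval : ∀ k : Fin n → ℕ,
      ∫ x, (∏ i, a (x i) * x i ^ k i) ∂π = ∏ i, α (k i) := by
    intro k
    exact integral_fintype_prod_eq_prod (E := fun _ => ℝ)
      (fun i t => a t * t ^ k i) (μ := fun _ => μ)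
  -- pointwise expansion of the integrand
  have hpoint : ∀ x : Fin n → ℝ,
      (∏ l, a (x l)) * (∏ j, ∏ k ∈ Finset.Ioi j, (x k - x j)) ^ 2
        = ∑ σ : Perm (Fin n), ∑ τ : Perm (Fin n),
            ((((Perm.sign σ : ℤ) : ℝ) * ((Perm.sign τ : ℤ) : ℝ)) *
              ∏ i, a (x i) * x i ^ (((σ⁻¹ i : Fin n) : ℕ) + ((τ⁻¹ i : Fin n) : ℕ))) := by
    intro x
    have hvdm : (∏ j, ∏ k ∈ Finset.Ioi j, (x k - x j))
        = ∑ σ : Perm (Fin n), ((Perm.sign σ : ℤ) : ℝ) * ∏ i, x i ^ ((σ⁻¹ i : Fin n) : ℕ) := by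
      rw [← Matrix.det_vandermonde x, Matrix.det_apply']
      refine Finset.sum_congr rfl fun σ _ => ?_
      congr 1
      rw [← Equiv.prod_comp σ (fun j => x j ^ ((σ⁻¹ j : Fin n) : ℕ))]
      simp [Matrix.vandermonde_apply]
    rw [hvdm, sq, Finset.sum_mul_sum, Finset.mul_sum]
    refine Finset.sum_congr rfl fun σ _ => ?_
    rw [Finset.mul_sum]
    refine Finset.sum_congr rfl fun τ _ => ?_
    have hprod : (∏ i, a (x i) * x i ^ (((σ⁻¹ i : Fin n) : ℕ) + ((τ⁻¹ i : Fin n) : ℕ)))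
        = (∏ l, a (x l)) * ((∏ i, x i ^ ((σ⁻¹ i : Fin n) : ℕ)) *
            (∏ i, x i ^ ((τ⁻¹ i : Fin n) : ℕ))) := by
      simp [pow_add, Finset.prod_mul_distrib, mul_assoc]
    rw [hprod]
    ring
  -- rewrite the set integral as an integral over π and compute it
  have hset : (∫ x in Set.univ.pi (fun _ : Fin n => I),
      (∏ l, a (x l)) * (∏ j, ∏ k ∈ Finset.Ioi j, (x k - x j)) ^ 2)
      = ∫ x, ((∏ l, a (x l)) * (∏ j, ∏ k ∈ Finset.Ioi j, (x k - x j)) ^ 2) ∂π := by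
    rw [hπdef, heine_restrict_pi_aux hI]
  have hcalc : (∫ x, ((∏ l, a (x l)) * (∏ j, ∏ k ∈ Finset.Ioi j, (x k - x j)) ^ 2) ∂π)
      = ∑ σ : Perm (Fin n), ∑ τ : Perm (Fin n),
          ((((Perm.sign σ : ℤ) : ℝ) * ((Perm.sign τ : ℤ) : ℝ)) *
            ∏ i : Fin n, α (((σ⁻¹ i : Fin n) : ℕ) + ((τ⁻¹ i : Fin n) : ℕ))) := by
    calc (∫ x, ((∏ l, a (x l)) * (∏ j, ∏ k ∈ Finset.Ioi j, (x k - x j)) ^ 2) ∂π)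
        = ∫ x, (∑ σ : Perm (Fin n), ∑ τ : Perm (Fin n),
            ((((Perm.sign σ : ℤ) : ℝ) * ((Perm.sign τ : ℤ) : ℝ)) *
              ∏ i, a (x i) * x i ^ (((σ⁻¹ i : Fin n) : ℕ) + ((τ⁻¹ i : Fin n) : ℕ)))) ∂π := by
          exact integral_congr_ae (Filter.Eventually.of_forall hpoint)
      _ = ∑ σ : Perm (Fin n), ∑ τ : Perm (Fin n),
            ((((Perm.sign σ : ℤ) : ℝ) * ((Perm.sign τ : ℤ) : ℝ)) *
              ∏ i : Fin n, α (((σ⁻¹ i : Fin n) : ℕ) + ((τ⁻¹ i : Fin n) : ℕ))) := by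
          rw [integral_finset_sum _ fun σ _ => integrable_finset_sum _ fun τ _ =>
            ((hint fun i => ((σ⁻¹ i : Fin n) : ℕ) + ((τ⁻¹ i : Fin n) : ℕ)).const_mul _)]
          refine Finset.sum_congr rfl fun σ _ => ?_
          rw [integral_finset_sum _ fun τ _ =>
            ((hint fun i => ((σ⁻¹ i : Fin n) : ℕ) + ((τ⁻¹ i : Fin n) : ℕ)).const_mul _)]
          refine Finset.sum_congr rfl fun τ _ => ?_
          rw [integral_const_mul, hval]
  have hdet : (Matrix.of fun j k : Fin n => ∫ t in I, a t * t ^ (j.val + k.val)).det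
      = ∑ ρ : Perm (Fin n), ((Perm.sign ρ : ℤ) : ℝ) * ∏ i : Fin n, α ((i : ℕ) + (ρ i : ℕ)) := by
    rw [Matrix.det_apply']
    refine Finset.sum_congr rfl fun ρ _ => ?_
    congr 1
    refine Finset.prod_congr rfl fun i _ => ?_
    rw [hαdef]
    simp [Nat.add_comm]
  rw [hset, hcalc, heine_perm_sum_inv, hdet, ← mul_assoc, one_div,
    inv_mul_cancel₀ (by exact_mod_cast n.factorial_ne_zero), one_mul]
end
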